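/- Let 0 < s < 1/2, μ = 1 - s, 0 < d < 1, η = d/2. Then the ellipsoid B^μ_η = {(z₁, z') ∈ ℂⁿ : |z₁ - (1-η)|² + (η/μ)|z'|² < η²} is contained in the ball B_s = {z ∈ ℂⁿ : |z - (s, 0, …, 0)| < 1 - s}. -/
import Mathlib


/-- For 0 < s < 1/2, μ = 1-s, 0 < d < 1, η = d/2, the ellipsoid
B^μ_η = {(z₁,z') : |z₁-(1-η)|² + (η/μ)|z'|² < η²} is contained in the ball
B_s of radius 1-s centered at (s,0,…,0); membership in B_s is expressed as
|z₁ - s|² + |z'|² < (1-s)². -/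
theorem ellipsoid_subset_ball {n : ℕ} (s d : ℝ) (hs0 : 0 < s) (hs : s < 1/2)
    (hd0 : 0 < d) (hd1 : d < 1)
    (μ η : ℝ) (hμ : μ = 1 - s) (hη : η = d / 2)
    (z₁ : ℂ) (z' : EuclideanSpace ℂ (Fin (n - 1)))
    (hz : ‖z₁ - (1 - η : ℝ)‖ ^ 2 + (η / μ) * ‖z'‖ ^ 2 < η ^ 2) :
    ‖z₁ - (s : ℝ)‖ ^ 2 + ‖z'‖ ^ 2 < (1 - s) ^ 2 := by
  set a := ‖z₁ - ((1 - η : ℝ) : ℂ)‖ with ha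
  set b := ‖z'‖ with hb
  have ha0 : 0 ≤ a := norm_nonneg _
  have hb0 : 0 ≤ b := norm_nonneg _
  have hη0 : 0 < η := by rw [hη]; linarith
  have hημ : η < μ := by rw [hη, hμ]; linarith
  have hμ0 : 0 < μ := lt_trans hη0 hημ
  -- triangle inequality
  have htri : ‖z₁ - (s : ℝ)‖ ≤ a + (μ - η) := by
    have h1 : z₁ - ((s : ℝ) : ℂ) = (z₁ - ((1 - η : ℝ) : ℂ)) + (((μ - η : ℝ)) : ℂ) := by
      rw [hμ]; push_cast; ring
    rw [h1]
    calc ‖(z₁ - ((1 - η : ℝ) : ℂ)) + (((μ - η : ℝ)) : ℂ)‖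
        ≤ a + ‖(((μ - η : ℝ)) : ℂ)‖ := norm_add_le _ _
      _ = a + (μ - η) := by
          rw [Complex.norm_real, Real.norm_eq_abs, abs_of_pos (by linarith)]
  have hns : 0 ≤ ‖z₁ - (s : ℝ)‖ := norm_nonneg _
  have hsq : ‖z₁ - (s : ℝ)‖ ^ 2 ≤ (a + (μ - η)) ^ 2 := by
    apply pow_le_pow_left₀ hns htri
  -- clear the division in hz
  have hz' : μ * a ^ 2 + η * b ^ 2 < μ * η ^ 2 := by
    have h1 := mul_lt_mul_of_pos_left hz hμ0
    have h2 : μ * (η / μ) = η := mul_div_cancel₀ η hμ0.ne'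
    nlinarith [h1, h2]
  rw [← hμ]
  nlinarith [mul_le_mul_of_nonneg_left hsq hη0.le, hz', mul_nonneg (sub_nonneg.2 hημ.le) (sq_nonneg (a - η)), hη0]
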